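/- Let (X,d) be a finite ultrametric space and P a poset isomorphism of (B_X, ⊆) onto (B_Y, ⊆) for a finite ultrametric space Y. Then P maps singletons to singletons, and the induced map φ : X → Y defined by {φ(x)} = P({x}) is a ball-preserving bijection with P(B) = φ(B) for every B ∈ B_X. -/
import Mathlib


/-- An ultrametric space: a metric space satisfying the strong triangle inequality. -/
def IsUltrametric (X : Type*) [MetricSpace X] : Prop :=
  ∀ x y z : X, dist x y ≤ max (dist x z) (dist z y)

/-- The ballean of a metric space: closed balls whose radius is realized as a
distance from the center (i.e. lies in the spectrum `Sp_t(X)`). -/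
def Ballean (X : Type*) [MetricSpace X] : Set (Set X) :=
  {B | ∃ t r, (∃ x : X, dist x t = r) ∧ B = Metric.closedBall t r}

/-- A ball-preserving map: images of balls of `B_X` are in `B_Y`, preimages of
balls of `B_Y` are in `B_X`. -/
def BallPreserving {X Y : Type*} [MetricSpace X] [MetricSpace Y] (F : X → Y) : Prop :=
  (∀ Z ∈ Ballean X, F '' Z ∈ Ballean Y) ∧ (∀ W ∈ Ballean Y, F ⁻¹' W ∈ Ballean X)

lemma singleton_mem_ballean {X : Type*} [MetricSpace X] (x : X) :
    ({x} : Set X) ∈ Ballean X :=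
  ⟨x, 0, ⟨x, dist_self x⟩, Metric.closedBall_zero.symm⟩

lemma ballean_nonempty {X : Type*} [MetricSpace X] {B : Set X} (hB : B ∈ Ballean X) :
    B.Nonempty := by
  obtain ⟨t, r, ⟨x, hx⟩, rfl⟩ := hB
  exact ⟨t, Metric.mem_closedBall_self (by rw [← hx]; exact dist_nonneg)⟩

lemma isMin_singleton {X : Type*} [MetricSpace X] (x : X) :
    IsMin (⟨{x}, singleton_mem_ballean x⟩ : {B // B ∈ Ballean X}) := by
  intro b hb
  have hsub : b.1 ⊆ {x} := hb
  have hne := ballean_nonempty b.2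
  have : b.1 = {x} := by
    rcases hne with ⟨y, hy⟩
    have : y = x := hsub hy
    subst this
    exact Set.Subset.antisymm hsub (Set.singleton_subset_iff.2 hy)
  show ({x} : Set X) ⊆ b.1
  rw [this]

lemma isMin_eq_singleton {X : Type*} [MetricSpace X] {b : {B // B ∈ Ballean X}}
    (hb : IsMin b) : ∃ y : X, b.1 = {y} := by
  obtain ⟨y, hy⟩ := ballean_nonempty b.2
  refine ⟨y, ?_⟩
  have h1 : (⟨{y}, singleton_mem_ballean y⟩ : {B // B ∈ Ballean X}) ≤ b :=
    Set.singleton_subset_iff.2 hy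
  have h2 := hb h1
  exact Set.Subset.antisymm h2 (Set.singleton_subset_iff.2 hy)

lemma orderIso_isMin {α β : Type*} [Preorder α] [Preorder β] (f : α ≃o β) {a : α}
    (h : IsMin a) : IsMin (f a) := by
  intro b hb
  have h1 : f.symm b ≤ a := by
    have := f.symm.monotone hb
    rwa [f.symm_apply_apply] at this
  have h2 := h h1
  have := f.monotone h2
  rwa [f.apply_symm_apply] at this

theorem orderIso_induces_ballPreserving {X Y : Type*} [MetricSpace X] [MetricSpace Y]
    [Fintype X] [Fintype Y] [Nonempty X] [Nonempty Y]
    (hX : IsUltrametric X) (hY : IsUltrametric Y)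
    (P : {B // B ∈ Ballean X} ≃o {B // B ∈ Ballean Y}) :
    ∃ φ : X → Y, Function.Bijective φ ∧ BallPreserving φ ∧
      (∀ x : X, ∀ hx : ({x} : Set X) ∈ Ballean X,
        (P ⟨{x}, hx⟩ : Set Y) = {φ x}) ∧
      (∀ B : Set X, ∀ hB : B ∈ Ballean X, (P ⟨B, hB⟩ : Set Y) = φ '' B) := by
  classical
  have key : ∀ x : X, ∃ y : Y, (P ⟨{x}, singleton_mem_ballean x⟩ : Set Y) = {y} :=
    fun x => isMin_eq_singleton (orderIso_isMin P (isMin_singleton x))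
  choose φ hφ using key
  have keyY : ∀ y : Y, ∃ x : X, (P.symm ⟨{y}, singleton_mem_ballean y⟩ : Set X) = {x} :=
    fun y => isMin_eq_singleton (orderIso_isMin P.symm (isMin_singleton y))
  choose ψ hψ using keyY
  have hPx : ∀ x : X, P ⟨{x}, singleton_mem_ballean x⟩ = ⟨{φ x}, singleton_mem_ballean _⟩ :=
    fun x => Subtype.ext (hφ x)
  have hPy : ∀ y : Y, P.symm ⟨{y}, singleton_mem_ballean y⟩ = ⟨{ψ y}, singleton_mem_ballean _⟩ :=
    fun y => Subtype.ext (hψ y)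
  have hψφ : ∀ x, ψ (φ x) = x := by
    intro x
    have := hPy (φ x)
    rw [← hPx x, P.symm_apply_apply] at this
    have := congrArg Subtype.val this
    simpa [eq_comm] using (Set.singleton_eq_singleton_iff.1 this)
  have hφψ : ∀ y, φ (ψ y) = y := by
    intro y
    have := hPx (ψ y)
    rw [← hPy y, P.apply_symm_apply] at this
    have := congrArg Subtype.val this
    simpa [eq_comm] using (Set.singleton_eq_singleton_iff.1 this)
  have hbij : Function.Bijective φ :=
    Function.bijective_iff_has_inverse.2 ⟨ψ, hψφ, hφψ⟩
  -- membership characterization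
  have hmem : ∀ (B : Set X) (hB : B ∈ Ballean X) (y : Y),
      y ∈ (P ⟨B, hB⟩ : Set Y) ↔ ψ y ∈ B := by
    intro B hB y
    constructor
    · intro hy
      have h1 : (⟨{y}, singleton_mem_ballean y⟩ : {B // B ∈ Ballean Y}) ≤ P ⟨B, hB⟩ :=
        Set.singleton_subset_iff.2 hy
      have h2 := P.symm.monotone h1
      rw [P.symm_apply_apply, hPy y] at h2
      exact h2 rfl
    · intro hy
      have h1 : (⟨{ψ y}, singleton_mem_ballean _⟩ : {B // B ∈ Ballean X}) ≤ ⟨B, hB⟩ :=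
        Set.singleton_subset_iff.2 hy
      have h2 := P.monotone h1
      rw [← hPy y, P.apply_symm_apply] at h2
      exact h2 rfl
  have himg : ∀ (B : Set X) (hB : B ∈ Ballean X), (P ⟨B, hB⟩ : Set Y) = φ '' B := by
    intro B hB
    ext y
    rw [hmem B hB y]
    constructor
    · intro h
      exact ⟨ψ y, h, hφψ y⟩
    · rintro ⟨x, hx, rfl⟩
      rwa [hψφ x]
  have hmemX : ∀ (W : Set Y) (hW : W ∈ Ballean Y) (x : X),
      x ∈ (P.symm ⟨W, hW⟩ : Set X) ↔ φ x ∈ W := by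
    intro W hW x
    constructor
    · intro hx
      have h1 : (⟨{x}, singleton_mem_ballean x⟩ : {B // B ∈ Ballean X}) ≤ P.symm ⟨W, hW⟩ :=
        Set.singleton_subset_iff.2 hx
      have h2 := P.monotone h1
      rw [P.apply_symm_apply, hPx x] at h2
      exact h2 rfl
    · intro hx
      have h1 : (⟨{φ x}, singleton_mem_ballean _⟩ : {B // B ∈ Ballean Y}) ≤ ⟨W, hW⟩ :=
        Set.singleton_subset_iff.2 hx
      have h2 := P.symm.monotone h1
      rw [← hPx x, P.symm_apply_apply] at h2
      exact h2 rfl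
  refine ⟨φ, hbij, ⟨?_, ?_⟩, ?_, himg⟩
  · intro Z hZ
    rw [← himg Z hZ]
    exact (P ⟨Z, hZ⟩).2
  · intro W hW
    have : φ ⁻¹' W = (P.symm ⟨W, hW⟩ : Set X) := by
      ext x
      rw [hmemX W hW x]
      rfl
    rw [this]
    exact (P.symm ⟨W, hW⟩).2
  · intro x hx
    have := hφ x
    convert this using 3
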